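/- Let M be a symmetric n×n real matrix with all entries in [0,1] such that every row sum of M is at most d, and let k ≥ 3 be an integer. Then the sum, over all k-tuples (i_1,…,i_k) of pairwise distinct indices in {1,…,n}, of the products M_{i_1 i_2}·M_{i_2 i_3}···M_{i_{k-1} i_k}·M_{i_k i_1}, is at most rank(M)·d^k. Consequently, if a random graph G on n vertices is formed by including each edge {i,j} independently with probability M_{ij}, the expected number of k-cycles in G is at most rank(M)·d^k. -/

import Mathlib

section Aux

private abbrev fcons {n m : ℕ} (a : Fin n) (g : Fin m → Fin n) : Fin (m+1) → Fin n :=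
  Fin.cons a g

lemma walk_sum {n : ℕ} (M : Matrix (Fin n) (Fin n) ℝ) : ∀ (m : ℕ) (a b : Fin n),
    (M ^ m) a b = ∑ g : Fin m → Fin n,
      if fcons a g (Fin.last m) = b then
        ∏ i : Fin m, M (fcons a g i.castSucc) (fcons a g i.succ) else 0 := by
  intro m
  induction m with
  | zero =>
      intro a b
      simp [Matrix.one_apply, fcons]
  | succ m ih =>
      intro a b
      rw [pow_succ', Matrix.mul_apply]
      rw [← Equiv.sum_comp (Fin.consEquiv fun _ => Fin n), Fintype.sum_prod_type]
      refine Finset.sum_congr rfl fun c _ => ?_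
      rw [ih c b, Finset.mul_sum]
      refine Finset.sum_congr rfl fun g _ => ?_
      have h1 : ∀ j, (Fin.consEquiv fun _ : Fin (m+1) => Fin n) (c, g) j = fcons c g j :=
        fun _ => rfl
      have h1' : (Fin.consEquiv fun _ : Fin (m+1) => Fin n) (c, g) = fcons c g :=
        funext h1
      rw [h1']
      have h2 : fcons a (fcons c g) (Fin.last (m+1)) = fcons c g (Fin.last m) := by
        rw [← Fin.succ_last]; exact Fin.cons_succ _ _ _
      rw [h2, mul_ite, mul_zero]
      congr 1
      rw [Fin.prod_univ_succ]
      simp [fcons, ← Fin.succ_castSucc]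

lemma cyc_le_trace {n m : ℕ} (M : Matrix (Fin n) (Fin n) ℝ)
    (hnn : ∀ i j, 0 ≤ M i j) (S : Finset (Fin (m+1) → Fin n)) :
    ∑ f ∈ S, ∏ i : Fin (m+1), M (f i) (f ⟨(i.1 + 1) % (m+1), Nat.mod_lt _ (Nat.succ_pos m)⟩)
      ≤ Matrix.trace (M ^ (m+1)) := by
  classical
  -- the "closed walk weight" function
  set t : Fin n × (Fin (m+1) → Fin n) → ℝ := fun p =>
    if fcons p.1 p.2 (Fin.last (m+1)) = p.1 then
      ∏ i : Fin (m+1), M (fcons p.1 p.2 i.castSucc) (fcons p.1 p.2 i.succ) else 0 with ht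
  have htrace : Matrix.trace (M ^ (m+1)) = ∑ p : Fin n × (Fin (m+1) → Fin n), t p := by
    rw [Matrix.trace]
    rw [Fintype.sum_prod_type]
    refine Finset.sum_congr rfl fun a _ => ?_
    rw [Matrix.diag]
    exact walk_sum M (m+1) a a
  set e : (Fin (m+1) → Fin n) → Fin n × (Fin (m+1) → Fin n) :=
    fun f => (f 0, fun i => f ⟨(i.1 + 1) % (m+1), Nat.mod_lt _ (Nat.succ_pos m)⟩) with he
  have hinj : Function.Injective e := by
    intro f f' hff
    have h0 : f 0 = f' 0 := congrArg Prod.fst hff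
    have h2 := congrArg Prod.snd hff
    funext j
    rcases j with ⟨j, hj⟩
    cases j with
    | zero => exact h0
    | succ j' =>
        have := congrFun h2 ⟨j', by omega⟩
        simpa [he, Nat.mod_eq_of_lt hj] using this
  have hval : ∀ f : Fin (m+1) → Fin n, t (e f)
      = ∏ i : Fin (m+1), M (f i) (f ⟨(i.1 + 1) % (m+1), Nat.mod_lt _ (Nat.succ_pos m)⟩) := by
    intro f
    have hcs : ∀ i : Fin (m+1), fcons (e f).1 (e f).2 i.castSucc = f i := by
      intro i
      refine Fin.cases ?_ (fun j => ?_) i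
      · exact rfl
      · rw [← Fin.succ_castSucc]
        show (e f).2 j.castSucc = _
        have hjl : ((j.castSucc : Fin (m+1))).1 = j.1 := by simp
        have : ((j.castSucc : Fin (m+1)).1 + 1) % (m+1) = j.1 + 1 :=
          Nat.mod_eq_of_lt (by rw [hjl]; have := j.isLt; omega)
        simp only [he]
        congr 1
        exact Fin.ext (by simpa using this)
    have hsc : ∀ i : Fin (m+1), fcons (e f).1 (e f).2 i.succ
        = f ⟨(i.1 + 1) % (m+1), Nat.mod_lt _ (Nat.succ_pos m)⟩ := fun i => rfl
    have hlast : fcons (e f).1 (e f).2 (Fin.last (m+1)) = (e f).1 := by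
      rw [← Fin.succ_last, hsc]
      show f _ = f 0
      congr 1
      exact Fin.ext (by simp [Nat.mod_self])
    rw [ht]
    simp only [hlast, if_pos rfl]
    exact Finset.prod_congr rfl fun i _ => by rw [hcs, hsc]
  calc ∑ f ∈ S, ∏ i : Fin (m+1), M (f i) (f ⟨(i.1 + 1) % (m+1), Nat.mod_lt _ (Nat.succ_pos m)⟩)
      = ∑ f ∈ S, t (e f) := by
        exact Finset.sum_congr rfl fun f _ => (hval f).symm
    _ = ∑ p ∈ S.image e, t p := (Finset.sum_image fun a _ b _ h => hinj h).symm
    _ ≤ ∑ p : Fin n × (Fin (m+1) → Fin n), t p := by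
        refine Finset.sum_le_sum_of_subset_of_nonneg (Finset.subset_univ _)
          fun p _ _ => ?_
        rw [ht]
        dsimp only
        split
        · exact Finset.prod_nonneg fun i _ => hnn _ _
        · exact le_rfl
    _ = Matrix.trace (M ^ (m+1)) := htrace.symm


lemma myConjPow {n : ℕ} (U D : Matrix (Fin n) (Fin n) ℝ) (hU : star U * U = 1) (hU' : U * star U = 1) :
    ∀ k : ℕ, (U * D * star U) ^ k = U * D ^ k * star U := by
  intro k
  induction k with
  | zero => simpa using hU'.symm
  | succ k ih =>
      rw [pow_succ, ih]
      have h3 : star U * (U * (D * star U)) = D * star U := by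
        rw [← mul_assoc, hU, one_mul]
      simp only [mul_assoc, h3, pow_succ]

lemma trace_pow_eq {n : ℕ} {M : Matrix (Fin n) (Fin n) ℝ} (hM : M.IsHermitian) (k : ℕ) :
    Matrix.trace (M ^ k) = ∑ i, (hM.eigenvalues i) ^ k := by
  have hspec := hM.spectral_theorem
  set U : Matrix (Fin n) (Fin n) ℝ := (Matrix.IsHermitian.eigenvectorUnitary hM : Matrix (Fin n) (Fin n) ℝ) with hUdef
  have hU : star U * U = 1 := Matrix.mem_unitaryGroup_iff'.mp (Matrix.IsHermitian.eigenvectorUnitary hM).2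
  have hU' : U * star U = 1 := Matrix.mem_unitaryGroup_iff.mp (Matrix.IsHermitian.eigenvectorUnitary hM).2
  conv_lhs => rw [hspec, Unitary.conjStarAlgAut_apply, ← hUdef]
  rw [myConjPow _ _ hU hU', Matrix.trace_mul_cycle, hU, one_mul,
    Matrix.diagonal_pow, Matrix.trace_diagonal]
  simp

lemma eig_abs_le {n : ℕ} {d : ℝ} (M : Matrix (Fin n) (Fin n) ℝ)
    (hnn : ∀ i j, 0 ≤ M i j) (hrow : ∀ i, ∑ j, M i j ≤ d)
    (lam : ℝ) (v : Fin n → ℝ) (hv : v ≠ 0) (heq : Matrix.mulVec M v = lam • v) : |lam| ≤ d := by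
  obtain ⟨j0, hj0⟩ : ∃ j, v j ≠ 0 := by
    by_contra h
    push_neg at h
    exact hv (funext h)
  obtain ⟨i0, -, hmax⟩ := Finset.exists_max_image (Finset.univ : Finset (Fin n))
    (fun i => |v i|) ⟨j0, Finset.mem_univ j0⟩
  have hpos : 0 < |v i0| :=
    lt_of_lt_of_le (abs_pos.mpr hj0) (hmax j0 (Finset.mem_univ j0))
  have key : |lam| * |v i0| ≤ d * |v i0| := by
    calc |lam| * |v i0| = |lam * v i0| := (abs_mul _ _).symm
      _ = |(Matrix.mulVec M v) i0| := by rw [heq]; simp [abs_mul]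
      _ = |∑ j, M i0 j * v j| := by rw [Matrix.mulVec, dotProduct]
      _ ≤ ∑ j, |M i0 j * v j| := Finset.abs_sum_le_sum_abs _ _
      _ = ∑ j, M i0 j * |v j| := by
          refine Finset.sum_congr rfl fun j _ => ?_
          rw [abs_mul, abs_of_nonneg (hnn i0 j)]
      _ ≤ ∑ j, M i0 j * |v i0| := by
          refine Finset.sum_le_sum fun j _ => ?_
          exact mul_le_mul_of_nonneg_left (hmax j (Finset.mem_univ j)) (hnn i0 j)
      _ = (∑ j, M i0 j) * |v i0| := (Finset.sum_mul _ _ _).symm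
      _ ≤ d * |v i0| := mul_le_mul_of_nonneg_right (hrow i0) (abs_nonneg _)
  exact le_of_mul_le_mul_right key hpos

open Matrix in
lemma part1 {n k : ℕ} (hk : 3 ≤ k) {d : ℝ}
    (M : Matrix (Fin n) (Fin n) ℝ) (hsymm : M.IsSymm)
    (h01 : ∀ i j, M i j ∈ Set.Icc (0 : ℝ) 1)
    (hrow : ∀ i, ∑ j, M i j ≤ d)
    (S : Finset (Fin k → Fin n)) :
    (∑ f ∈ S, ∏ i : Fin k, M (f i) (f ⟨(i.1 + 1) % k, Nat.mod_lt _ (Nat.lt_of_lt_of_le (Nat.zero_lt_succ 2) hk)⟩))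
      ≤ (M.rank : ℝ) * d ^ k := by
  classical
  have hnn : ∀ i j, 0 ≤ M i j := fun i j => (h01 i j).1
  have hM : M.IsHermitian := by
    rw [Matrix.IsHermitian, Matrix.conjTranspose_eq_transpose_of_trivial]
    exact hsymm
  obtain ⟨m, rfl⟩ : ∃ m, k = m + 1 := ⟨k - 1, by omega⟩
  have h1 : (∑ f ∈ S, ∏ i : Fin (m+1),
      M (f i) (f ⟨(i.1 + 1) % (m+1), Nat.mod_lt _ (by omega)⟩)) ≤ Matrix.trace (M ^ (m+1)) := by
    have := cyc_le_trace M hnn S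
    convert this using 3
  have h2 : Matrix.trace (M ^ (m+1)) = ∑ i, (hM.eigenvalues i) ^ (m+1) := trace_pow_eq hM _
  have heig : ∀ i, |hM.eigenvalues i| ≤ d := by
    intro i
    refine eig_abs_le M hnn hrow _ (fun j => hM.eigenvectorBasis i j) ?_ ?_
    · intro h
      refine hM.eigenvectorBasis.orthonormal.ne_zero i ?_
      ext j
      exact congrFun h j
    · exact hM.mulVec_eigenvectorBasis i
  have h3 : ∑ i, (hM.eigenvalues i) ^ (m+1) ≤ (M.rank : ℝ) * d ^ (m+1) := by
    rw [hM.rank_eq_card_non_zero_eigs, Fintype.card_subtype]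
    rw [← Finset.sum_filter_ne_zero (Finset.univ) (f := fun i => (hM.eigenvalues i) ^ (m+1))]
    have hfil : (Finset.univ.filter fun i => hM.eigenvalues i ^ (m+1) ≠ 0)
        = (Finset.univ.filter fun i => hM.eigenvalues i ≠ 0) := by
      apply Finset.filter_congr
      intro i _
      simp [pow_ne_zero_iff]
    rw [hfil]
    calc ∑ i ∈ Finset.univ.filter fun i => hM.eigenvalues i ≠ 0, hM.eigenvalues i ^ (m+1)
        ≤ ∑ _i ∈ Finset.univ.filter fun i => hM.eigenvalues i ≠ 0, d ^ (m+1) := by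
          refine Finset.sum_le_sum fun i _ => ?_
          refine le_trans (le_abs_self _) ?_
          rw [abs_pow]
          exact pow_le_pow_left₀ (abs_nonneg _) (heig i) _
      _ = ((Finset.univ.filter fun i => hM.eigenvalues i ≠ 0).card : ℝ) * d ^ (m+1) := by
          rw [Finset.sum_const, nsmul_eq_mul]
  calc _ ≤ Matrix.trace (M ^ (m+1)) := h1
    _ = _ := h2
    _ ≤ _ := h3

end Aux


open MeasureTheory

/-- The Bernoulli measure on `Bool` with success probability `p` (clamped to `[0,1]`). -/
noncomputable def bernMeasure (p : ℝ) : Measure Bool :=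
  (PMF.bernoulli (min (Real.toNNReal p) 1) (min_le_right _ _)).toMeasure

/-- The inhomogeneous Erdős–Rényi random graph measure: each potential edge
`{i,j}` (indexed by ordered pairs `i < j`) is present independently with
probability `M i j`. -/
noncomputable def erMeasure (n : ℕ) (M : Matrix (Fin n) (Fin n) ℝ) :
    Measure ({p : Fin n × Fin n // p.1 < p.2} → Bool) :=
  Measure.pi fun p => bernMeasure (M p.1.1 p.1.2)

/-- Adjacency in the sampled graph: `i ≠ j` and the indicator of the pair `{i,j}`
is on. -/
def erAdj {n : ℕ} (ω : {p : Fin n × Fin n // p.1 < p.2} → Bool) (i j : Fin n) :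
    Prop :=
  ∃ p : {p : Fin n × Fin n // p.1 < p.2}, ω p = true ∧
    ((p.1.1 = i ∧ p.1.2 = j) ∨ (p.1.1 = j ∧ p.1.2 = i))

instance {n : ℕ} (ω : {p : Fin n × Fin n // p.1 < p.2} → Bool) (i j : Fin n) :
    Decidable (erAdj ω i j) := by unfold erAdj; infer_instance

/-- The number of `k`-cycles of the sampled graph: the number of injective maps
`f : Fin k → Fin n` with `f(i) ~ f(i+1)` cyclically, divided by `2k` (each
`k`-cycle subgraph corresponds to exactly `2k` such ordered tuples). -/
noncomputable def kCycleCount (n k : ℕ) (hk : 0 < k)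
    (ω : {p : Fin n × Fin n // p.1 < p.2} → Bool) : ℝ :=
  (((Finset.univ : Finset (Fin k → Fin n)).filter (fun f =>
      Function.Injective f ∧
      ∀ i : Fin k, erAdj ω (f i) (f ⟨(i.1 + 1) % k, Nat.mod_lt _ hk⟩))).card : ℝ)
    / (2 * k)


section Aux2
abbrev Edge (n : ℕ) := {p : Fin n × Fin n // p.1 < p.2}

def EB (n : ℕ) : Edge n → Type := fun _ => Bool

instance (n : ℕ) (q : Edge n) : MeasurableSpace (EB n q) := Bool.instMeasurableSpace

instance msc (n : ℕ) : MeasurableSingletonClass (Edge n → Bool) := by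
  constructor
  intro ω
  have h : ({ω} : Set (Edge n → Bool)) = Set.pi Set.univ (fun e => {ω e}) := by
    ext ω'
    simp [funext_iff, Set.mem_pi, eq_comm]
  rw [h]
  exact MeasurableSet.pi Set.countable_univ fun e _ => measurableSet_singleton _

instance bernProb (p : ℝ) : IsProbabilityMeasure (bernMeasure p) :=
  PMF.toMeasure.isProbabilityMeasure _

instance erProb (n : ℕ) (M : Matrix (Fin n) (Fin n) ℝ) :
    IsProbabilityMeasure (erMeasure n M) := by
  unfold erMeasure; infer_instance

lemma bern_int_ind (p : ℝ) (h0 : 0 ≤ p) (h1 : p ≤ 1) :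
    ∫ b, (if b = true then (1 : ℝ) else 0) ∂(bernMeasure p) = p := by
  rw [bernMeasure, PMF.integral_eq_sum]
  have hmin : min (Real.toNNReal p) 1 = Real.toNNReal p :=
    min_eq_left (Real.toNNReal_le_one.mpr h1)
  simp [PMF.bernoulli_apply, hmin, Real.coe_toNNReal _ h0]

lemma bern_int_one (p : ℝ) : ∫ _b, (1 : ℝ) ∂(bernMeasure p) = 1 := by
  rw [integral_const, probReal_univ]
  simp

def edgeOf {n : ℕ} (i j : Fin n) (h : i ≠ j) : Edge n :=
  if hlt : i < j then ⟨(i, j), hlt⟩ else ⟨(j, i), h.lt_or_gt.resolve_left hlt⟩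

lemma erAdj_iff {n : ℕ} (ω : Edge n → Bool) {i j : Fin n} (h : i ≠ j) :
    erAdj ω i j ↔ ω (edgeOf i j h) = true := by
  constructor
  · rintro ⟨p, hp, (⟨h1, h2⟩ | ⟨h1, h2⟩)⟩
    · have hij : i < j := h1 ▸ h2 ▸ p.2
      have : edgeOf i j h = p := by
        rw [edgeOf, dif_pos hij]
        exact Subtype.ext (Prod.ext h1.symm h2.symm)
      rw [this]; exact hp
    · have hji : j < i := h1 ▸ h2 ▸ p.2
      have : edgeOf i j h = p := by
        rw [edgeOf, dif_neg (asymm hji)]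
        exact Subtype.ext (Prod.ext h1.symm h2.symm)
      rw [this]; exact hp
  · intro hω
    refine ⟨edgeOf i j h, hω, ?_⟩
    rw [edgeOf]
    split_ifs
    · exact Or.inl ⟨rfl, rfl⟩
    · exact Or.inr ⟨rfl, rfl⟩

lemma M_edgeOf {n : ℕ} (M : Matrix (Fin n) (Fin n) ℝ) (hsymm : M.IsSymm)
    {i j : Fin n} (h : i ≠ j) :
    M (edgeOf i j h).1.1 (edgeOf i j h).1.2 = M i j := by
  rw [edgeOf]
  split_ifs
  · rfl
  · exact hsymm.apply i j ▸ rfl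

lemma edgeOf_cases {n : ℕ} {a b c d : Fin n} (hab : a ≠ b) (hcd : c ≠ d)
    (h : edgeOf a b hab = edgeOf c d hcd) : (a = c ∧ b = d) ∨ (a = d ∧ b = c) := by
  rw [edgeOf, edgeOf] at h
  split_ifs at h <;>
  · rcases Subtype.ext_iff.mp h with h'
    rcases Prod.mk.injEq .. ▸ h' with ⟨h1, h2⟩
    first
      | exact Or.inl ⟨h1, h2⟩
      | exact Or.inr ⟨h1, h2⟩
      | exact Or.inl ⟨h2, h1⟩
      | exact Or.inr ⟨h2, h1⟩

lemma nxt_ne {k : ℕ} (hk3 : 3 ≤ k) (i : Fin k) :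
    (⟨(i.1 + 1) % k, Nat.mod_lt _ (Nat.lt_of_lt_of_le (Nat.zero_lt_succ 2) hk3)⟩ : Fin k) ≠ i := by
  intro h
  have h' : (i.1 + 1) % k = i.1 := congrArg Fin.val h
  have hi := i.isLt
  rcases Nat.lt_or_ge (i.1 + 1) k with hlt | hge
  · rw [Nat.mod_eq_of_lt hlt] at h'; omega
  · have : i.1 + 1 = k := by omega
    rw [this, Nat.mod_self] at h'; omega

lemma nxt_inj {n k : ℕ} (hk3 : 3 ≤ k) {f : Fin k → Fin n} (hf : Function.Injective f)
    (hne : ∀ i : Fin k, f i ≠ f ⟨(i.1 + 1) % k, Nat.mod_lt _ (Nat.lt_of_lt_of_le (Nat.zero_lt_succ 2) hk3)⟩)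
    : Function.Injective (fun i : Fin k =>
      edgeOf (f i) (f ⟨(i.1 + 1) % k, Nat.mod_lt _ (Nat.lt_of_lt_of_le (Nat.zero_lt_succ 2) hk3)⟩) (hne i)) := by
  intro i j h
  rcases edgeOf_cases _ _ h with ⟨h1, _⟩ | ⟨h1, h2⟩
  · exact hf h1
  · exfalso
    have hij : i = (⟨(j.1 + 1) % k, Nat.mod_lt _ (Nat.lt_of_lt_of_le (Nat.zero_lt_succ 2) hk3)⟩ : Fin k) := hf h1
    have hji : (⟨(i.1 + 1) % k, Nat.mod_lt _ (Nat.lt_of_lt_of_le (Nat.zero_lt_succ 2) hk3)⟩ : Fin k) = j := hf h2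
    have e1 : i.1 = (j.1 + 1) % k := congrArg Fin.val hij
    have e2 : (i.1 + 1) % k = j.1 := congrArg Fin.val hji
    have hi := i.isLt
    have hj := j.isLt
    -- i ≡ j+1, j ≡ i+1 (mod k) with k ≥ 3 : contradiction
    rcases Nat.lt_or_ge (j.1 + 1) k with hlt | hge
    · rw [Nat.mod_eq_of_lt hlt] at e1
      rcases Nat.lt_or_ge (i.1 + 1) k with hlt2 | hge2
      · rw [Nat.mod_eq_of_lt hlt2] at e2; omega
      · have : i.1 + 1 = k := by omega
        rw [this, Nat.mod_self] at e2; omega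
    · have : j.1 + 1 = k := by omega
      rw [this, Nat.mod_self] at e1
      rw [Nat.mod_eq_of_lt (by omega)] at e2
      omega

lemma integral_cycle_prod {n k : ℕ} (hk3 : 3 ≤ k) (M : Matrix (Fin n) (Fin n) ℝ)
    (hsymm : M.IsSymm) (h01 : ∀ i j, M i j ∈ Set.Icc (0 : ℝ) 1)
    (f : Fin k → Fin n) (hf : Function.Injective f) :
    ∫ ω, ∏ i : Fin k,
        (if erAdj ω (f i) (f ⟨(i.1 + 1) % k, Nat.mod_lt _ (Nat.lt_of_lt_of_le (Nat.zero_lt_succ 2) hk3)⟩) then (1:ℝ) else 0)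
      ∂(erMeasure n M)
    = ∏ i : Fin k, M (f i) (f ⟨(i.1 + 1) % k, Nat.mod_lt _ (Nat.lt_of_lt_of_le (Nat.zero_lt_succ 2) hk3)⟩) := by
  classical
  have hne : ∀ i : Fin k, f i ≠ f ⟨(i.1 + 1) % k, Nat.mod_lt _ (Nat.lt_of_lt_of_le (Nat.zero_lt_succ 2) hk3)⟩ :=
    fun i h => (nxt_ne hk3 i) (hf h.symm)
  set e : Fin k → Edge n :=
    fun i => edgeOf (f i) (f ⟨(i.1 + 1) % k, Nat.mod_lt _ (Nat.lt_of_lt_of_le (Nat.zero_lt_succ 2) hk3)⟩) (hne i) with hedef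
  have he : Function.Injective e := nxt_inj hk3 hf hne
  set G : Edge n → Bool → ℝ := fun p b =>
    if p ∈ Finset.image e Finset.univ then (if b = true then (1:ℝ) else 0) else 1 with hG
  have hpt : ∀ ω : Edge n → Bool,
      (∏ i : Fin k,
        (if erAdj ω (f i) (f ⟨(i.1 + 1) % k, Nat.mod_lt _ (Nat.lt_of_lt_of_le (Nat.zero_lt_succ 2) hk3)⟩) then (1:ℝ) else 0))
      = ∏ p : Edge n, G p (ω p) := by
    intro ω
    have h1 : ∀ i : Fin k,
        (if erAdj ω (f i) (f ⟨(i.1 + 1) % k, Nat.mod_lt _ (Nat.lt_of_lt_of_le (Nat.zero_lt_succ 2) hk3)⟩) then (1:ℝ) else 0)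
        = (if ω (e i) = true then (1:ℝ) else 0) := by
      intro i
      congr 1
      rw [eq_iff_iff]
      exact erAdj_iff ω (hne i)
    rw [Finset.prod_congr rfl fun i _ => h1 i]
    rw [← Finset.prod_image (g := e) (f := fun p => if ω p = true then (1:ℝ) else 0)
      (fun a _ b _ h => he h)]
    calc ∏ p ∈ Finset.image e Finset.univ, (if ω p = true then (1:ℝ) else 0)
        = ∏ p ∈ Finset.image e Finset.univ, G p (ω p) :=
          Finset.prod_congr rfl fun p hp => by rw [hG]; simp only [if_pos hp]
      _ = ∏ p : Edge n, G p (ω p) :=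
          Finset.prod_subset (Finset.subset_univ _)
            (fun p _ hp => by rw [hG]; simp only [if_neg hp])
  -- pass to a MeasureSpace structure to use `integral_fintype_prod_eq_prod`
  letI msp : ∀ q : Edge n, MeasureSpace (EB n q) :=
    fun q => { volume := bernMeasure (M q.1.1 q.1.2) }
  haveI sfin : ∀ q : Edge n, SigmaFinite (volume : Measure (EB n q)) :=
    fun q => inferInstanceAs (SigmaFinite (bernMeasure (M q.1.1 q.1.2)))
  have hvol : erMeasure n M
      = (volume : Measure (∀ q : Edge n, EB n q)) := by
    rw [MeasureTheory.volume_pi]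
    rfl
  calc ∫ ω, ∏ i : Fin k,
        (if erAdj ω (f i) (f ⟨(i.1 + 1) % k, Nat.mod_lt _ (Nat.lt_of_lt_of_le (Nat.zero_lt_succ 2) hk3)⟩) then (1:ℝ) else 0)
      ∂(erMeasure n M)
      = ∫ ω : ∀ q : Edge n, EB n q, ∏ p : Edge n, G p (ω p) := by
        rw [hvol]
        exact integral_congr_ae (Filter.Eventually.of_forall fun ω => hpt ω)
    _ = ∏ p : Edge n, ∫ b : EB n p, G p b := MeasureTheory.integral_fintype_prod_volume_eq_prod (E := EB n) G
    _ = ∏ p : Edge n, (if p ∈ Finset.image e Finset.univ then M p.1.1 p.1.2 else 1) := by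
        refine Finset.prod_congr rfl fun p _ => ?_
        rw [hG]
        by_cases hp : p ∈ Finset.image e Finset.univ
        · simp only [if_pos hp]
          exact bern_int_ind _ (h01 _ _).1 (h01 _ _).2
        · simp only [if_neg hp]
          exact bern_int_one _
    _ = ∏ p ∈ Finset.image e Finset.univ, M p.1.1 p.1.2 := by
        rw [← Finset.prod_subset (Finset.subset_univ (Finset.image e Finset.univ))
          (fun p _ hp => if_neg hp)]
        exact Finset.prod_congr rfl fun p hp => if_pos hp
    _ = ∏ i : Fin k, M (e i).1.1 (e i).1.2 :=
        Finset.prod_image (fun a _ b _ h => he h)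
    _ = ∏ i : Fin k, M (f i) (f ⟨(i.1 + 1) % k, Nat.mod_lt _ (Nat.lt_of_lt_of_le (Nat.zero_lt_succ 2) hk3)⟩) :=
        Finset.prod_congr rfl fun i _ => M_edgeOf M hsymm (hne i)

end Aux2

/-- Let `M` be a symmetric `n×n` matrix with entries in `[0,1]` and
every row sum at most `d`, and let `k ≥ 3`.  Then the sum over all `k`-tuples of
pairwise distinct indices of `M_{i_1 i_2}···M_{i_k i_1}` is at most
`rank(M)·d^k`; consequently, the expected number of `k`-cycles of the random
graph obtained by including each edge `{i,j}` independently with probability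
`M_{ij}` is at most `rank(M)·d^k`. -/
theorem stochastic_block_cycle_bound (n k : ℕ) (hk : 3 ≤ k) (d : ℝ)
    (M : Matrix (Fin n) (Fin n) ℝ) (hsymm : M.IsSymm)
    (h01 : ∀ i j, M i j ∈ Set.Icc (0 : ℝ) 1)
    (hrow : ∀ i, ∑ j, M i j ≤ d) :
    (∑ f ∈ (Finset.univ : Finset (Fin k → Fin n)).filter Function.Injective,
        ∏ i : Fin k, M (f i) (f ⟨(i.1 + 1) % k, Nat.mod_lt _ (by omega)⟩))
      ≤ (M.rank : ℝ) * d ^ k ∧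
    (∫ ω, kCycleCount n k (by omega) ω ∂(erMeasure n M))
      ≤ (M.rank : ℝ) * d ^ k := by
  classical
  have hk0 : 0 < k := by omega
  constructor
  · exact part1 hk M hsymm h01 hrow _
  · set S := (Finset.univ : Finset (Fin k → Fin n)).filter Function.Injective with hS
    have hfix : ∀ (h : 0 < k) (ω : Edge n → Bool), kCycleCount n k h ω
        = (∑ f ∈ S, ∏ i : Fin k,
            (if erAdj ω (f i) (f ⟨(i.1 + 1) % k, Nat.mod_lt _ h⟩) then (1:ℝ) else 0))
          / (2 * k) := by
      intro h ω
      rw [kCycleCount]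
      congr 1
      rw [← Finset.filter_filter, ← Finset.sum_boole]
      exact Finset.sum_congr rfl fun f _ => by rw [Fintype.prod_boole]; convert rfl
    calc (∫ ω, kCycleCount n k (by omega) ω ∂(erMeasure n M))
        = (∑ f ∈ S, ∫ ω, (∏ i : Fin k,
            (if erAdj ω (f i) (f ⟨(i.1 + 1) % k, Nat.mod_lt _ hk0⟩) then (1:ℝ) else 0))
            ∂(erMeasure n M)) / (2 * k) := by
          simp only [hfix]
          rw [integral_div, MeasureTheory.integral_finset_sum _
            (fun f _ => Integrable.of_finite)]
      _ = (∑ f ∈ S, ∏ i : Fin k,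
            M (f i) (f ⟨(i.1 + 1) % k, Nat.mod_lt _ hk0⟩)) / (2 * k) := by
          congr 1
          refine Finset.sum_congr rfl fun f hf => ?_
          exact integral_cycle_prod hk M hsymm h01 f (Finset.mem_filter.mp hf).2
      _ ≤ ∑ f ∈ S, ∏ i : Fin k, M (f i) (f ⟨(i.1 + 1) % k, Nat.mod_lt _ hk0⟩) := by
          refine div_le_self ?_ ?_
          · refine Finset.sum_nonneg fun f _ => Finset.prod_nonneg fun i _ => (h01 _ _).1
          · have : (3 : ℝ) ≤ (k : ℝ) := by exact_mod_cast hk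
            nlinarith
      _ ≤ (M.rank : ℝ) * d ^ k := part1 hk M hsymm h01 hrow S
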